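/- Let q ≡ 3 (mod 4) be an odd prime power with q ≠ 3, and let β ∈ NQR(q) with β ≠ −1. Then the one-factorizations of the complete graph on F ∪ {∞} generated by the starter S_β and by the starter −S_β are orthogonal: for all γ, δ ∈ F, the one-factors F^β_γ and G^β_δ share at most one edge. -/
import Mathlib


/-- The set of nonzero squares (quadratic residues) of a field. -/
def QR (F : Type*) [Field F] : Set F := {x | x ≠ 0 ∧ ∃ y, y ^ 2 = x}

/-- The set of nonzero non-squares of a field. -/
def NQR (F : Type*) [Field F] : Set F := {x | x ≠ 0 ∧ ¬ ∃ y, y ^ 2 = x}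

/-- A graph has a cycle of length 4. -/
def HasC4 {V : Type*} (G : SimpleGraph V) : Prop :=
  ∃ (v : V) (c : G.Walk v v), c.IsCycle ∧ c.length = 4

/-- The one-factor `F^β_γ = {{∞, γ}} ∪ {{x+γ, xβ+γ} : x ∈ QR(q)}` on `F ∪ {∞}`
(with `∞ = none`), of the one-factorization generated by the starter `S_β`. -/
def starterFactor {F : Type*} [Field F] (β γ : F) : Set (Sym2 (Option F)) :=
  {s(none, some γ)} ∪ {e | ∃ x ∈ QR F, e = s(some (x + γ), some (x * β + γ))}

/-- The one-factor `G^β_γ = {{∞, γ}} ∪ {{-x+γ, -xβ+γ} : x ∈ QR(q)}`, of the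
one-factorization generated by the starter `-S_β`. -/
def negStarterFactor {F : Type*} [Field F] (β γ : F) : Set (Sym2 (Option F)) :=
  {s(none, some γ)} ∪ {e | ∃ x ∈ QR F, e = s(some (-x + γ), some (-(x * β) + γ))}

/-- If `q ≡ 3 (mod 4)` is an odd prime power, `q ≠ 3`, and `β ∈ NQR(q) \ {-1}`,
then the one-factorizations generated by the starters `S_β` and `-S_β` are
orthogonal. -/
theorem starter_negStarter_orthogonal (q : ℕ) (hq : q % 4 = 3) (hq3 : q ≠ 3)
    (F : Type*) [Field F] [Fintype F] (hcard : Fintype.card F = q)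
    (β : F) (hβ : β ∈ NQR F) (hβ1 : β ≠ -1) :
    ∀ γ δ : F, Set.Subsingleton (starterFactor β γ ∩ negStarterFactor β δ) := by
  have hneg1 : ¬ IsSquare (-1 : F) := by
    rw [FiniteField.isSquare_neg_one_iff, hcard]; omega
  obtain ⟨hβ0, hβns⟩ := hβ
  have hβne1 : β ≠ 1 := fun h => hβns ⟨1, by rw [h]; ring⟩
  have h1β : (1 : F) + β ≠ 0 := fun h => hβ1 (by linear_combination h)
  intro γ δ
  have key : ∀ e ∈ starterFactor β γ ∩ negStarterFactor β δ,
      (e = s((none : Option F), some γ) ∧ γ = δ) ∨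
      (γ ≠ δ ∧ e = s(some ((δ - γ)/(1 + β) + γ), some ((δ - γ)/(1 + β) * β + γ))) := by
    rintro e ⟨h1, h2⟩
    rcases h1 with h1 | ⟨x, ⟨hx0, a, ha⟩, rfl⟩
    · -- e = s(none, γ)
      simp only [Set.mem_singleton_iff] at h1
      subst h1
      left
      refine ⟨rfl, ?_⟩
      rcases h2 with h2 | ⟨y, hy, h2⟩
      · simp only [Set.mem_singleton_iff, Sym2.eq, Sym2.rel_iff', Prod.mk.injEq,
          Prod.swap_prod_mk] at h2
        rcases h2 with ⟨_, h⟩ | ⟨h, _⟩ <;> simp_all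
      · simp only [Sym2.eq, Sym2.rel_iff', Prod.mk.injEq, Prod.swap_prod_mk] at h2
        rcases h2 with ⟨h, _⟩ | ⟨_, h⟩ <;> simp_all
    · -- e = s(x+γ, xβ+γ)
      rcases h2 with h2 | ⟨y, ⟨hy0, b, hb⟩, h2⟩
      · simp only [Set.mem_singleton_iff, Sym2.eq, Sym2.rel_iff', Prod.mk.injEq,
          Prod.swap_prod_mk] at h2
        rcases h2 with ⟨h, _⟩ | ⟨_, h⟩ <;> simp_all
      · simp only [Sym2.eq, Sym2.rel_iff', Prod.mk.injEq, Prod.swap_prod_mk,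
          Option.some.injEq] at h2
        rcases h2 with ⟨e1, e2⟩ | ⟨e1, e2⟩
        · -- x+γ = -y+δ, xβ+γ = -yβ+δ : impossible
          exfalso
          have hxy : x = -y := by
            have : x * (β - 1) = (-y) * (β - 1) := by linear_combination e2 - e1
            exact mul_right_cancel₀ (sub_ne_zero.mpr hβne1) this
          apply hneg1
          have hb0 : b ≠ 0 := fun h => hy0 (by rw [← hb, h]; ring)
          refine ⟨a / b, ?_⟩
          have : (a / b) ^ 2 = -1 := by
            rw [div_pow, ha, hb, hxy, neg_div, div_self hy0]
          rw [← this]; ring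
        · -- x+γ = -yβ+δ, xβ+γ = -y+δ
          have hxy : x = y := by
            have : x * (β - 1) = y * (β - 1) := by linear_combination e2 - e1
            exact mul_right_cancel₀ (sub_ne_zero.mpr hβne1) this
          subst hxy
          have hx : x * (1 + β) = δ - γ := by linear_combination e1
          have hxv : x = (δ - γ) / (1 + β) := by
            field_simp
            linear_combination hx
          right
          constructor
          · intro h
            apply hx0
            rw [hxv, h, sub_self, zero_div]
          · rw [hxv]
  intro a ha b hb
  rcases key a ha with ⟨ha1, ha2⟩ | ⟨ha1, ha2⟩ <;> rcases key b hb with ⟨hb1, hb2⟩ | ⟨hb1, hb2⟩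
  · rw [ha1, hb1]
  · exact absurd ha2 hb1
  · exact absurd hb2 ha1
  · rw [ha2, hb2]
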